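/- Let V : ℝ^m → ℝ be four times continuously differentiable and let G : ℝ^m × ℝ^m → ℝ^m be three times continuously differentiable with G(u,v) = G(v,u) for all u, v and G(z,z) = ∇V(z) for all z. Define B(x) := 3·D₂²G(x,x), the bilinear-map-valued function given by three times the second derivative of y ↦ G(x,y) at y = x. Then for every x ∈ ℝ^m and every u ∈ ℝ^m: 4·D₂³G(x,x)[u,u,u] = 2·(D_x B)(x)[u][u,u] − D⁴V(x)[u,u,u], where (D_x B)(x)[u] is the directional derivative in direction u of the map x ↦ B(x), and D⁴V(x)[u,u,u] denotes the vector with components V,_{γμνσ}(x) u^μ u^ν u^σ. (This is the symmetry relation C_{γμνσ} = 2 B_{γμν},_σ − V,_{γμνσ} for the fourth-order Taylor coefficient of a symmetric discrete gradient.) -/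

import Mathlib

section helpers
variable {E F : Type*} [NormedAddCommGroup E] [NormedSpace ℝ E]
  [NormedAddCommGroup F] [NormedSpace ℝ F]

lemma fderiv_comp_const_add' (g : E → F) (a x : E) :
    fderiv ℝ (fun y => g (a + y)) x = fderiv ℝ g (a + x) := by
  by_cases h : DifferentiableAt ℝ g (a + x)
  · have h1 : HasFDerivAt (fun y : E => a + y) (ContinuousLinearMap.id ℝ E) x := by
      simpa using (hasFDerivAt_id x).const_add a
    simpa [Function.comp_def] using (h.hasFDerivAt.comp x h1).fderiv
  · have h2 : ¬ DifferentiableAt ℝ (fun y => g (a + y)) x := by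
      intro hc
      apply h
      have h3 : DifferentiableAt ℝ (fun w : E => w - a) (a + x) :=
        (differentiable_id.sub_const a).differentiableAt
      have h4 : DifferentiableAt ℝ (fun y => g (a + y)) ((fun w : E => w - a) (a + x)) := by
        simpa using hc
      have h5 := h4.comp (a + x) h3
      have : (fun y => g (a + y)) ∘ (fun w : E => w - a) = g := by
        funext w; simp
      rwa [this] at h5
    rw [fderiv_zero_of_not_differentiableAt h, fderiv_zero_of_not_differentiableAt h2]

lemma iteratedFDeriv_comp_const_add' (f : E → F) (a : E) :
    ∀ (n : ℕ) (x : E),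
      iteratedFDeriv ℝ n (fun y => f (a + y)) x = iteratedFDeriv ℝ n f (a + x) := by
  intro n
  induction n with
  | zero => intro x; ext m; simp
  | succ n ih =>
    intro x; ext m
    rw [iteratedFDeriv_succ_apply_left, iteratedFDeriv_succ_apply_left]
    have hfun : (iteratedFDeriv ℝ n fun y => f (a + y))
        = fun z => iteratedFDeriv ℝ n f (a + z) := funext fun z => ih z
    rw [hfun, fderiv_comp_const_add' (iteratedFDeriv ℝ n f) a x]

end helpers

set_option maxHeartbeats 2000000 in
theorem symmetric_discrete_gradient_fourth_coefficient
    (m : ℕ)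
    (V : EuclideanSpace ℝ (Fin m) → ℝ) (hV : ContDiff ℝ 4 V)
    (G : EuclideanSpace ℝ (Fin m) → EuclideanSpace ℝ (Fin m) →
      EuclideanSpace ℝ (Fin m))
    (hG : ContDiff ℝ 3 (fun q : EuclideanSpace ℝ (Fin m) × EuclideanSpace ℝ (Fin m) =>
      G q.1 q.2))
    (hsym : ∀ u v, G u v = G v u)
    (hcons : ∀ z, G z z = gradient V z)
    (B : EuclideanSpace ℝ (Fin m) →
      ContinuousMultilinearMap ℝ (fun _ : Fin 2 => EuclideanSpace ℝ (Fin m))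
        (EuclideanSpace ℝ (Fin m)))
    (hB : ∀ z, B z = (3:ℝ) • iteratedFDeriv ℝ 2 (fun y => G z y) z)
    (x u : EuclideanSpace ℝ (Fin m)) :
    (4:ℝ) • iteratedFDeriv ℝ 3 (fun y => G x y) x ![u, u, u] =
      (2:ℝ) • (fderiv ℝ B x u) ![u, u] -
        iteratedFDeriv ℝ 3 (fun z => gradient V z) x ![u, u, u] := by
  classical
  let E := EuclideanSpace ℝ (Fin m)
  let H : E × E → E := fun q => G q.1 q.2
  have hH : ContDiff ℝ 3 H := hG
  let inr2 : E →L[ℝ] E × E := ContinuousLinearMap.inr ℝ E E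
  let dg : E →L[ℝ] E × E := (ContinuousLinearMap.id ℝ E).prod (ContinuousLinearMap.id ℝ E)
  -- Fact A : partial derivatives in the second variable via the full derivative
  have factA : ∀ (i : ℕ), (i : WithTop ℕ∞) ≤ 3 → ∀ (z w : E),
      iteratedFDeriv ℝ i (fun y => G z y) w
        = (iteratedFDeriv ℝ i H (z, w)).compContinuousLinearMap (fun _ => inr2) := by
    intro i hi z w
    have h1 : ContDiff ℝ 3 (fun p : E × E => H ((z, (0:E)) + p)) :=
      hH.comp (contDiff_const.add contDiff_id)
    have h2 : (fun y => G z y) = (fun p : E × E => H ((z, (0:E)) + p)) ∘ inr2 := by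
      funext y; simp [H, inr2]
    rw [h2, inr2.iteratedFDeriv_comp_right h1 w hi]
    congr 1
    rw [iteratedFDeriv_comp_const_add' H (z, (0:E)) i (inr2 w)]
    congr 1
    simp [inr2]
  -- T : the full third derivative at (x,x)
  set T := iteratedFDeriv ℝ 3 H (x, x) with hT
  have hdgx : dg x = (x, x) := rfl
  -- gradient term
  have hgradeq : (fun z : E => gradient V z) = H ∘ dg := by
    funext z
    simp only [Function.comp_apply]
    rw [show dg z = (z, z) from rfl]
    exact (hcons z).symm
  have factV : iteratedFDeriv ℝ 3 (fun z : E => gradient V z) x ![u, u, u]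
      = T ![(u, u), (u, u), (u, u)] := by
    rw [hgradeq, dg.iteratedFDeriv_comp_right hH x (le_refl _)]
    rw [ContinuousMultilinearMap.compContinuousLinearMap_apply]
    rw [hdgx]
    congr 1
    funext i
    fin_cases i <;> rfl
  -- LHS term
  have factL : iteratedFDeriv ℝ 3 (fun y => G x y) x ![u, u, u]
      = T ![((0:E), u), ((0:E), u), ((0:E), u)] := by
    rw [factA 3 (by norm_num) x x, ContinuousMultilinearMap.compContinuousLinearMap_apply]
    congr 1
    funext i
    fin_cases i <;> rfl
  -- the B part
  let Φ := iteratedFDeriv ℝ 2 H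
  have hΦ1 : ContDiff ℝ 1 Φ := hH.iteratedFDeriv_right (i := 2) (by norm_num)
  have hΦdiff : DifferentiableAt ℝ Φ (x, x) :=
    (hΦ1.differentiable one_ne_zero).differentiableAt
  let Lc := ContinuousMultilinearMap.compContinuousLinearMapL
      (F := E) (𝕜 := ℝ) (fun _ : Fin 2 => inr2)
  have hBeq : B = fun z : E => (3:ℝ) • Lc (Φ (dg z)) := by
    funext z
    rw [hB z, factA 2 (by norm_num) z z]
    rfl
  have hchain : HasFDerivAt B
      ((3:ℝ) • (Lc.comp ((fderiv ℝ Φ (x, x)).comp dg))) x := by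
    rw [hBeq]
    have hΦdiff' : DifferentiableAt ℝ Φ (dg x) := hΦdiff
    have hcomp : HasFDerivAt (fun z : E => Φ (dg z))
        ((fderiv ℝ Φ (x, x)).comp dg) x :=
      (hΦdiff'.hasFDerivAt).comp x dg.hasFDerivAt
    exact (Lc.hasFDerivAt.comp x hcomp).const_smul (3:ℝ)
  have hBder : (fderiv ℝ B x u) ![u, u]
      = (3:ℝ) • T ![(u, u), ((0:E), u), ((0:E), u)] := by
    rw [hchain.fderiv]
    have h1 : (((3:ℝ) • (Lc.comp ((fderiv ℝ Φ (x, x)).comp dg))) u)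
        = (3:ℝ) • Lc ((fderiv ℝ Φ (x, x)) (u, u)) := by
      simp [ContinuousLinearMap.smul_apply, ContinuousLinearMap.comp_apply]
      rfl
    rw [h1, ContinuousMultilinearMap.smul_apply]
    congr 1
    have h2 : Lc ((fderiv ℝ Φ (x, x)) (u, u)) ![u, u]
        = ((fderiv ℝ Φ (x, x)) (u, u)) ![((0:E), u), ((0:E), u)] := by
      rw [ContinuousMultilinearMap.compContinuousLinearMapL_apply,
        ContinuousMultilinearMap.compContinuousLinearMap_apply]
      congr 1
      funext i
      fin_cases i <;> rfl
    rw [h2, hT]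
    rw [iteratedFDeriv_succ_apply_left]
    congr 1
  -- swap symmetry
  let σ : E × E →L[ℝ] E × E := (ContinuousLinearMap.snd ℝ E E).prod (ContinuousLinearMap.fst ℝ E E)
  have hσ3 : ∀ a b c : E × E, T ![a, b, c] = T ![σ a, σ b, σ c] := by
    intro a b c
    have hHσ : H = H ∘ σ := by
      funext q
      exact hsym q.1 q.2
    have := σ.iteratedFDeriv_comp_right (f := H) hH (x, x) (i := 3) (le_refl _)
    have hσx : σ (x, x) = (x, x) := rfl
    rw [hσx] at this
    conv_lhs => rw [hT, hHσ, this]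
    rw [ContinuousMultilinearMap.compContinuousLinearMap_apply, hT]
    congr 1
    funext i
    fin_cases i <;> rfl
  -- symmetry in the first two slots
  have h12 : ∀ a b c : E × E, T ![a, b, c] = T ![b, a, c] := by
    intro a b c
    have hg2 : ContDiff ℝ 2 (fderiv ℝ H) := hH.fderiv_right (by norm_num)
    have hsymm2 : IsSymmSndFDerivAt ℝ (fderiv ℝ H) (x, x) :=
      hg2.contDiffAt.isSymmSndFDerivAt (by norm_num)
    rw [hT]
    conv_lhs => rw [iteratedFDeriv_succ_apply_right]
    conv_rhs => rw [iteratedFDeriv_succ_apply_right]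
    have e1 : Fin.init (![a, b, c] : Fin 3 → E × E) = ![a, b] := by
      funext i; fin_cases i <;> rfl
    have e2 : Fin.init (![b, a, c] : Fin 3 → E × E) = ![b, a] := by
      funext i; fin_cases i <;> rfl
    rw [e1, e2]
    have e3 : (![a, b, c] : Fin 3 → E × E) (Fin.last 2) = c := rfl
    have e4 : (![b, a, c] : Fin 3 → E × E) (Fin.last 2) = c := rfl
    rw [e3, e4]
    conv_lhs => rw [iteratedFDeriv_two_apply]
    conv_rhs => rw [iteratedFDeriv_two_apply]
    have := hsymm2 a b
    simp only [Matrix.cons_val_zero, Matrix.cons_val_one, Matrix.head_cons]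
    rw [this]
  -- symmetry in the last two slots
  have h23 : ∀ a b c : E × E, T ![a, b, c] = T ![a, c, b] := by
    intro a b c
    rw [hT]
    conv_lhs => rw [iteratedFDeriv_succ_apply_left]
    conv_rhs => rw [iteratedFDeriv_succ_apply_left]
    have e1 : Fin.tail (![a, b, c] : Fin 3 → E × E) = ![b, c] := by
      funext i; fin_cases i <;> rfl
    have e2 : Fin.tail (![a, c, b] : Fin 3 → E × E) = ![c, b] := by
      funext i; fin_cases i <;> rfl
    rw [show (![a, b, c] : Fin 3 → E × E) 0 = a from rfl,
      show (![a, c, b] : Fin 3 → E × E) 0 = a from rfl, e1, e2]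
    have key : (fun y => Φ y ![b, c]) = fun y => Φ y ![c, b] := by
      funext y
      have hs : IsSymmSndFDerivAt ℝ H y :=
        hH.contDiffAt.isSymmSndFDerivAt (by norm_num)
      rw [show Φ = iteratedFDeriv ℝ 2 H from rfl]
      rw [iteratedFDeriv_two_apply, iteratedFDeriv_two_apply]
      simp only [Matrix.cons_val_zero, Matrix.cons_val_one, Matrix.head_cons]
      exact hs b c
    have l1 := fderiv_continuousMultilinear_apply_const_apply hΦdiff ![b, c] a
    have l2 := fderiv_continuousMultilinear_apply_const_apply hΦdiff ![c, b] a
    rw [← l1, ← l2, key]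
  -- final algebra
  rw [factL, hBder, factV]
  set e' := (((0:E), u) : E × E) with he'
  set f' := ((u, (0:E)) : E × E) with hf'
  have hfe : ((u, u) : E × E) = f' + e' := by
    rw [he', hf', Prod.mk_add_mk, add_zero, zero_add]
  have upd0 : ∀ (a b c z : E × E), Function.update ![a, b, c] (0 : Fin 3) z = ![z, b, c] := by
    intro a b c z; funext i; fin_cases i <;> simp [Function.update]
  have upd1 : ∀ (a b c z : E × E), Function.update ![a, b, c] (1 : Fin 3) z = ![a, z, c] := by
    intro a b c z; funext i; fin_cases i <;> simp [Function.update]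
  have upd2 : ∀ (a b c z : E × E), Function.update ![a, b, c] (2 : Fin 3) z = ![a, b, z] := by
    intro a b c z; funext i; fin_cases i <;> simp [Function.update]
  have add1 : ∀ p q b c : E × E, T ![p + q, b, c] = T ![p, b, c] + T ![q, b, c] := by
    intro p q b c
    have h := T.map_update_add ![p, b, c] (0 : Fin 3) p q
    simpa [upd0] using h
  have add2 : ∀ b p q c : E × E, T ![b, p + q, c] = T ![b, p, c] + T ![b, q, c] := by
    intro b p q c
    have h := T.map_update_add ![b, p, c] (1 : Fin 3) p q
    simpa [upd1] using h
  have add3 : ∀ b c p q : E × E, T ![b, c, p + q] = T ![b, c, p] + T ![b, c, q] := by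
    intro b c p q
    have h := T.map_update_add ![b, c, p] (2 : Fin 3) p q
    simpa [upd2] using h
  have hσe : ∀ a b c : E × E, (![σ a, σ b, σ c] : Fin 3 → E × E) = ![σ a, σ b, σ c] := fun _ _ _ => rfl
  have hσef : σ e' = f' := rfl
  have hσfe : σ f' = e' := rfl
  have q1 : T ![e', f', e'] = T ![f', e', e'] := h12 e' f' e'
  have q2 : T ![e', e', f'] = T ![f', e', e'] := by rw [h23 e' e' f']; exact q1
  have q3 : T ![e', f', f'] = T ![f', e', e'] := by
    have h := hσ3 e' f' f'
    have hv : (![σ e', σ f', σ f'] : Fin 3 → E × E) = ![f', e', e'] := by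
      funext i; fin_cases i <;> rfl
    rwa [hv] at h
  have q6 : T ![f', f', f'] = T ![e', e', e'] := by
    have h := hσ3 f' f' f'
    have hv : (![σ f', σ f', σ f'] : Fin 3 → E × E) = ![e', e', e'] := by
      funext i; fin_cases i <;> rfl
    rwa [hv] at h
  have q4 : T ![f', f', e'] = T ![f', e', e'] := by
    have h := hσ3 f' f' e'
    have hv : (![σ f', σ f', σ e'] : Fin 3 → E × E) = ![e', e', f'] := by
      funext i; fin_cases i <;> rfl
    rw [hv] at h
    rw [h]; exact q2
  have q5 : T ![f', e', f'] = T ![f', e', e'] := by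
    have h := hσ3 f' e' f'
    have hv : (![σ f', σ e', σ f'] : Fin 3 → E × E) = ![e', f', e'] := by
      funext i; fin_cases i <;> rfl
    rw [hv] at h
    rw [h]; exact q1
  rw [hfe]
  rw [add1, add1, add2, add2, add3, add3, add3, add3]
  rw [q1, q2, q3, q4, q5, q6]
  module
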